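/- Consider an MDP with nonempty finite state and action sets S, A, transition kernel α, discount factor γ ∈ (0,1) and initial distribution μ ∈ Δ_S. Let η ∈ ℝ^{S×A} satisfy η(s,a) ≥ 0 for all (s,a) and Σ_a η(s,a) − γ·Σ_{s',a'} α(s|s',a')·η(s',a') = (1−γ)·μ(s) for all s ∈ S, and let ρ(s) = Σ_a η(s,a). Let τ ∈ Δ_A^S be any policy such that τ(a|s) = η(s,a)/ρ(s) whenever ρ(s) > 0 (and τ(·|s) arbitrary in Δ_A when ρ(s) = 0). Then η = γ·P_τᵀη + (1−γ)(μ∗τ), and consequently η = η_γ^{τ,μ}. -/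
import Mathlib


open Matrix

/-- For an MDP with finite nonempty `S, A`, kernel `α`, `γ ∈ (0,1)` and
`μ ∈ Δ_S`: if `η ≥ 0` satisfies the stationarity equations
`∑_a η(s,a) - γ ∑_{s',a'} α(s|s',a') η(s',a') = (1-γ) μ(s)`, `ρ(s) = ∑_a η(s,a)`, and
`τ ∈ Δ_A^S` is any policy with `τ(a|s) = η(s,a)/ρ(s)` whenever `ρ(s) > 0`, then
`η = γ P_τᵀ η + (1-γ)(μ∗τ)` and consequently `η = η_γ^{τ,μ}`. -/
theorem stmt13 {S A : Type*} [Fintype S] [Fintype A] [DecidableEq S] [DecidableEq A]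
    [Nonempty S] [Nonempty A]
    (α : S → A → S → ℝ) (hα : ∀ s a, (∀ s', 0 ≤ α s a s') ∧ ∑ s', α s a s' = 1)
    (γ : ℝ) (hγ : γ ∈ Set.Ioo (0 : ℝ) 1)
    (μ : S → ℝ) (hμ : (∀ s, 0 ≤ μ s) ∧ ∑ s, μ s = 1)
    (η : S × A → ℝ) (hηpos : ∀ x, 0 ≤ η x)
    (hstat : ∀ s, (∑ a, η (s, a)) - γ * ∑ x : S × A, α x.1 x.2 s * η x = (1 - γ) * μ s)
    (ρ : S → ℝ) (hρ : ∀ s, ρ s = ∑ a, η (s, a))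
    (τ : S → A → ℝ) (hτ : ∀ s, (∀ a, 0 ≤ τ s a) ∧ ∑ a, τ s a = 1)
    (hcond : ∀ s, 0 < ρ s → ∀ a, τ s a = η (s, a) / ρ s) :
    let Pτ : Matrix (S × A) (S × A) ℝ := Matrix.of fun x y => α x.1 x.2 y.1 * τ y.1 y.2
    η = γ • (Pτᵀ).mulVec η + (1 - γ) • (fun x => μ x.1 * τ x.1 x.2) ∧
    η = (1 - γ) • ((1 - γ • Pτᵀ)⁻¹).mulVec (fun x => μ x.1 * τ x.1 x.2) := by
  intro Pτ
  obtain ⟨hγ0, hγ1⟩ := hγ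
  -- auxiliary facts
  have hρnn : ∀ s, 0 ≤ ρ s := fun s => by
    rw [hρ s]; exact Finset.sum_nonneg fun a _ => hηpos (s, a)
  -- Part 1
  have part1 : η = γ • (Pτᵀ).mulVec η + (1 - γ) • (fun x => μ x.1 * τ x.1 x.2) := by
    funext x
    obtain ⟨s, a⟩ := x
    have hmv : (Pτᵀ).mulVec η (s, a) = τ s a * ∑ y : S × A, α y.1 y.2 s * η y := by
      simp only [mulVec, dotProduct, transpose_apply, Pτ, Matrix.of_apply]
      rw [Finset.mul_sum]
      exact Finset.sum_congr rfl fun y _ => by ring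
    have key : γ * (Pτᵀ).mulVec η (s, a) + (1 - γ) * (μ s * τ s a) = τ s a * ρ s := by
      have h := hstat s
      rw [hρ s]
      rw [hmv]
      have : (∑ a, η (s, a)) = γ * ∑ y : S × A, α y.1 y.2 s * η y + (1 - γ) * μ s := by
        linarith
      rw [this]; ring
    show η (s, a) = γ • (Pτᵀ).mulVec η (s, a) + (1 - γ) • (μ s * τ s a)
    simp only [smul_eq_mul]
    rw [key]
    rcases lt_or_eq_of_le (hρnn s) with hpos | hzero
    · rw [hcond s hpos a, div_mul_cancel₀ _ (ne_of_gt hpos)]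
    · have hz : ∀ a, η (s, a) = 0 := by
        intro a'
        have := (Finset.sum_eq_zero_iff_of_nonneg
          (fun a' _ => hηpos (s, a'))).mp ((hρ s).symm.trans hzero.symm)
        exact this a' (Finset.mem_univ _)
      rw [hz a, ← hzero, mul_zero]
  refine ⟨part1, ?_⟩
  -- Invertibility of 1 - γ • Pτᵀ
  have hrow : ∀ x : S × A, ∑ y : S × A, Pτ x y = 1 := by
    intro x
    simp only [Pτ, Matrix.of_apply, Fintype.sum_prod_type]
    calc ∑ s', ∑ a', α x.1 x.2 s' * τ s' a'
        = ∑ s', α x.1 x.2 s' * ∑ a', τ s' a' := by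
          exact Finset.sum_congr rfl fun s' _ => (Finset.mul_sum _ _ _).symm
      _ = ∑ s', α x.1 x.2 s' := by
          exact Finset.sum_congr rfl fun s' _ => by rw [(hτ s').2, mul_one]
      _ = 1 := (hα x.1 x.2).2
  have hPnn : ∀ x y : S × A, 0 ≤ Pτ x y := fun x y =>
    mul_nonneg ((hα x.1 x.2).1 y.1) ((hτ y.1).1 y.2)
  have hdetC : ((1 : Matrix (S × A) (S × A) ℝ) - γ • Pτ).det ≠ 0 := by
    intro hdet
    obtain ⟨v, hv0, hv⟩ := (Matrix.exists_mulVec_eq_zero_iff).2 hdet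
    -- v = γ • Pτ.mulVec v
    have hvx : ∀ x, v x = γ * ∑ y, Pτ x y * v y := by
      intro x
      have := congrFun hv x
      simp only [sub_mulVec, smul_mulVec, Pi.sub_apply, Pi.smul_apply, one_mulVec,
        smul_eq_mul, Pi.zero_apply] at this
      have h2 : v x - γ * (Pτ.mulVec v x) = 0 := this
      simp only [mulVec, dotProduct] at h2 ⊢
      linarith
    obtain ⟨x0, _, hx0⟩ := Finset.exists_max_image Finset.univ (fun x => |v x|)
      ⟨Classical.arbitrary _, Finset.mem_univ _⟩
    have hM : 0 < |v x0| := by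
      rcases Function.ne_iff.mp hv0 with ⟨x, hx⟩
      exact lt_of_lt_of_le (abs_pos.mpr hx) (hx0 x (Finset.mem_univ _))
    have hbound : |v x0| ≤ γ * |v x0| := by
      calc |v x0| = |γ * ∑ y, Pτ x0 y * v y| := by rw [hvx x0]
        _ = γ * |∑ y, Pτ x0 y * v y| := by rw [abs_mul, abs_of_pos hγ0]
        _ ≤ γ * ∑ y, |Pτ x0 y * v y| :=
            mul_le_mul_of_nonneg_left (Finset.abs_sum_le_sum_abs _ _) hγ0.le
        _ ≤ γ * ∑ y, Pτ x0 y * |v x0| := by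
            apply mul_le_mul_of_nonneg_left _ hγ0.le
            apply Finset.sum_le_sum
            intro y _
            rw [abs_mul, abs_of_nonneg (hPnn x0 y)]
            exact mul_le_mul_of_nonneg_left (hx0 y (Finset.mem_univ _)) (hPnn x0 y)
        _ = γ * |v x0| := by rw [← Finset.sum_mul, hrow x0, one_mul]
    nlinarith
  have hdetB : ((1 : Matrix (S × A) (S × A) ℝ) - γ • Pτᵀ).det ≠ 0 := by
    have : (1 : Matrix (S × A) (S × A) ℝ) - γ • Pτᵀ =
        ((1 : Matrix (S × A) (S × A) ℝ) - γ • Pτ)ᵀ := by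
      rw [transpose_sub, transpose_smul, transpose_one]
    rw [this, det_transpose]
    exact hdetC
  have hunit : IsUnit ((1 : Matrix (S × A) (S × A) ℝ) - γ • Pτᵀ).det :=
    isUnit_iff_ne_zero.mpr hdetB
  set B : Matrix (S × A) (S × A) ℝ := 1 - γ • Pτᵀ with hB
  set ν : S × A → ℝ := fun x => μ x.1 * τ x.1 x.2 with hν
  have hBeq : B.mulVec η = (1 - γ) • ν := by
    funext x
    have := congrFun part1 x
    simp only [hB, sub_mulVec, smul_mulVec, one_mulVec, Pi.sub_apply, Pi.smul_apply,
      Pi.add_apply, smul_eq_mul] at this ⊢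
    linarith
  have : B⁻¹.mulVec (B.mulVec η) = η := by
    rw [mulVec_mulVec, Matrix.nonsing_inv_mul B hunit, one_mulVec]
  rw [hBeq] at this
  rw [← this, mulVec_smul]
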